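/- arXiv:0704.0874 — 3 statements merged into one kernel-verified Lean document; each statement's English description precedes it below -/
import Mathlib

section
/- Let n ≥ 3 be an integer, set m := ⌊(n+1)/2⌋, and let a be an integer. Let o : ℕ → ℤ and R : ℕ → ℤ be nondecreasing sequences such that for every index i, if o(i+1) = o(i) and R(i+1) = R(i), then n divides a + 2i − o(i). Then for every index i and every integer w with 0 ≤ w ≤ m, one has (o(i+w) + R(i+w)) − (o(i) + R(i)) ≥ w − 1. -/
/-- Let `n ≥ 3`, `m := ⌊(n+1)/2⌋`, and `a` an integer. Let `o, R : ℕ → ℤ` be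
nondecreasing sequences such that whenever `o(i+1) = o(i)` and `R(i+1) = R(i)`,
one has `n ∣ a + 2i - o(i)`. Then for every index `i` and every `0 ≤ w ≤ m`,
`(o(i+w) + R(i+w)) - (o(i) + R(i)) ≥ w - 1`. -/
theorem window_inequality (n a m : ℤ) (hn : 3 ≤ n) (hm : m = (n + 1) / 2)
    (o R : ℕ → ℤ) (ho : Monotone o) (hR : Monotone R)
    (hdiv : ∀ i : ℕ, o (i + 1) = o i → R (i + 1) = R i → n ∣ a + 2 * (i : ℤ) - o i) :
    ∀ (i w : ℕ), (w : ℤ) ≤ m →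
      (o (i + w) + R (i + w)) - (o i + R i) ≥ (w : ℤ) - 1 := by
  classical
  intro i w hw
  set s : ℕ → ℤ := fun j => o j + R j with hs
  have hsmono : Monotone s := fun x y h => add_le_add (ho h) (hR h)
  have flatstep : ∀ j : ℕ, ¬(o (j+1) = o j ∧ R (j+1) = R j) → s j + 1 ≤ s (j+1) := by
    intro j h
    have h1 := ho (Nat.le_add_right j 1); have h2 := hR (Nat.le_add_right j 1)
    rcases lt_or_eq_of_le h1 with h1' | h1'
    · simp only [hs]; omega
    · rcases lt_or_eq_of_le h2 with h2' | h2'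
      · simp only [hs]; omega
      · exact absurd ⟨h1'.symm, h2'.symm⟩ h
  have gain : ∀ p q : ℕ, p ≤ q →
      (∀ j, p ≤ j → j < q → ¬(o (j+1) = o j ∧ R (j+1) = R j)) →
      (q : ℤ) - (p : ℤ) ≤ s q - s p := by
    intro p q hpq
    induction q, hpq using Nat.le_induction with
    | base => intro _; simp
    | succ q hq ih =>
      intro hnf
      have h1 := ih (fun j hj hj2 => hnf j hj (by omega))
      have h2 := flatstep q (hnf q hq (by omega))
      push_cast; push_cast at h1; omega
  set F : Finset ℕ := (Finset.Ico i (i+w)).filter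
      (fun j => o (j+1) = o j ∧ R (j+1) = R j) with hF
  have memF : ∀ j, j ∈ F ↔ (i ≤ j ∧ j < i + w) ∧ (o (j+1) = o j ∧ R (j+1) = R j) := by
    intro j
    simp [hF, Finset.mem_filter, Finset.mem_Ico]
  rcases Finset.eq_empty_or_nonempty F with hFe | hFne
  · -- no flat indices: gain at least w
    have := gain i (i+w) (by omega) (by
      intro j hj1 hj2 hfl
      have : j ∈ F := (memF j).2 ⟨⟨hj1, hj2⟩, hfl⟩
      simp [hFe] at this)
    push_cast at this
    have : s (i+w) - s i ≥ (w : ℤ) - 1 := by omega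
    exact this
  · set l := F.min' hFne with hl
    set jj := F.max' hFne with hjj
    have hlF : l ∈ F := F.min'_mem hFne
    have hjF : jj ∈ F := F.max'_mem hFne
    have hlw := (memF l).1 hlF
    have hjw := (memF jj).1 hjF
    have hlj : l ≤ jj := F.min'_le jj hjF
    have hnoflat_lo : ∀ j, i ≤ j → j < l → ¬(o (j+1) = o j ∧ R (j+1) = R j) := by
      intro j hj1 hj2 hfl
      have hjw' : j < i + w := by omega
      have : j ∈ F := (memF j).2 ⟨⟨hj1, hjw'⟩, hfl⟩
      have := F.min'_le j this
      omega
    have hnoflat_hi : ∀ j, jj + 1 ≤ j → j < i + w → ¬(o (j+1) = o j ∧ R (j+1) = R j) := by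
      intro j hj1 hj2 hfl
      have : j ∈ F := (memF j).2 ⟨⟨by omega, hj2⟩, hfl⟩
      have := F.le_max' j this
      omega
    have g1 := gain i l hlw.1.1 hnoflat_lo
    have g2 := gain (jj+1) (i+w) (by omega) hnoflat_hi
    rcases eq_or_lt_of_le hlj with heq | hlt
    · -- single flat index
      have hstep : s l ≤ s (l+1) := hsmono (Nat.le_succ l)
      have hmid : s (l+1) ≤ s (jj+1) := hsmono (by omega)
      push_cast at g1 g2
      have : s (i+w) - s i ≥ (w : ℤ) - 1 := by omega
      exact this
    · -- two distinct flat indices l < jj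
      have hdl : n ∣ a + 2 * (l : ℤ) - o l :=
        hdiv l ((memF l).1 hlF).2.1 ((memF l).1 hlF).2.2
      have hdj : n ∣ a + 2 * (jj : ℤ) - o jj :=
        hdiv jj ((memF jj).1 hjF).2.1 ((memF jj).1 hjF).2.2
      have hd : n ∣ (o jj - o l) - 2 * ((jj : ℤ) - l) := by
        have := dvd_sub hdl hdj
        have heq : (a + 2 * (l : ℤ) - o l) - (a + 2 * (jj : ℤ) - o jj)
            = (o jj - o l) - 2 * ((jj : ℤ) - l) := by ring
        rwa [heq] at this
      have hole : o l ≤ o jj := ho hlj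
      have h2m : 2 * m ≤ n + 1 := by omega
      have hbound : 2 * ((jj : ℤ) - l) ≤ n - 1 := by
        have h1 : (jj : ℤ) - l ≤ (w : ℤ) - 1 := by
          have := hlw.1; have := hjw.2; push_cast; omega
        omega
      have hkey : 2 * ((jj : ℤ) - l) ≤ o jj - o l := by
        by_contra hc
        push_neg at hc
        have hpos : 0 < 2 * ((jj : ℤ) - l) - (o jj - o l) := by omega
        have hdvd' : n ∣ 2 * ((jj : ℤ) - l) - (o jj - o l) := by
          simpa [neg_sub] using dvd_neg.mpr hd
        have := Int.le_of_dvd hpos hdvd'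
        omega
      have hRlj : R l ≤ R jj := hR hlj
      have hmid : s l + 2 * ((jj : ℤ) - l) ≤ s jj := by
        simp only [hs]; omega
      have hstep : s jj ≤ s (jj+1) := hsmono (Nat.le_succ jj)
      push_cast at g1 g2
      have hlt' : (1 : ℤ) ≤ (jj : ℤ) - l := by
        have : l < jj := hlt
        push_cast; omega
      have : s (i+w) - s i ≥ (w : ℤ) - 1 := by omega
      exact this
end

section
/- Let n ≥ 3 be an integer, set m := ⌊(n+1)/2⌋, and let a be an integer. Let o : ℕ → ℤ and R : ℕ → ℤ be nondecreasing sequences with o(0) ≥ 0 and R(0) = 0, such that for every index i, if o(i+1) = o(i) and R(i+1) = R(i), then n divides a + 2i − o(i). Then for all integers b ≥ 0 and all indices i with i ≥ b·m, one has o(i) + R(i) ≥ b(m−1). -/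
private lemma inec_step (o R : ℕ → ℤ) (ho : Monotone o) (hR : Monotone R)
    (j : ℕ) (hj : ¬(o (j + 1) = o j ∧ R (j + 1) = R j)) :
    o j + R j + 1 ≤ o (j + 1) + R (j + 1) := by
  have h1 : o j ≤ o (j + 1) := ho (Nat.le_succ j)
  have h2 : R j ≤ R (j + 1) := hR (Nat.le_succ j)
  by_cases h : o (j + 1) = o j
  · have h' : R (j + 1) ≠ R j := fun hr => hj ⟨h, hr⟩
    omega
  · omega

private lemma inec_gap (o R : ℕ → ℤ) (ho : Monotone o) (hR : Monotone R) :
    ∀ i j : ℕ, j ≤ i →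
      (∀ t, j ≤ t → t < i → ¬(o (t + 1) = o t ∧ R (t + 1) = R t)) →
      o j + R j + (i : ℤ) - (j : ℤ) ≤ o i + R i := by
  intro i
  induction i with
  | zero =>
    intro j hj _
    have : j = 0 := Nat.le_zero.mp hj
    subst this; simp
  | succ i ih =>
    intro j hj hns
    rcases Nat.lt_or_ge j (i + 1) with h | h
    · have hj' : j ≤ i := by omega
      have h1 := ih j hj' (fun t ht1 ht2 => hns t ht1 (by omega))
      have h2 := inec_step o R ho hR i (hns i hj' (by omega))
      push_cast
      push_cast at h1
      omega
    · have : j = i + 1 := by omega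
      subst this; simp

set_option maxHeartbeats 1600000 in
private lemma inec_key (n a m : ℤ) (hn : 3 ≤ n) (hm2 : 2 ≤ m) (hnm : 2 * m - 1 ≤ n)
    (o R : ℕ → ℤ) (ho : Monotone o) (hR : Monotone R)
    (ho0 : 0 ≤ o 0) (hR0 : R 0 = 0)
    (hdiv : ∀ i : ℕ, o (i + 1) = o i → R (i + 1) = R i → n ∣ a + 2 * (i : ℤ) - o i) :
    ∀ i : ℕ,
      ((o (i + 1) = o i ∧ R (i + 1) = R i) → (m - 1) * (i : ℤ) ≤ m * (o i + R i)) ∧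
      (m - 1) * (i : ℤ) - (m - 1) ≤ m * (o i + R i) := by
  intro i
  induction i using Nat.strong_induction_on with
  | _ i ih =>
    by_cases hex : ∃ k, k < i ∧ (o (k + 1) = o k ∧ R (k + 1) = R k)
    · obtain ⟨k0, hk0, hSt0⟩ := hex
      have hi1 : 1 ≤ i := by omega
      obtain ⟨k, hki, hko, hkR, hkmax⟩ :
          ∃ k, k < i ∧ o (k + 1) = o k ∧ R (k + 1) = R k ∧
            ∀ t, k < t → t < i → ¬(o (t + 1) = o t ∧ R (t + 1) = R t) := by
        set P : ℕ → Prop := fun k => o (k + 1) = o k ∧ R (k + 1) = R k with hP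
        have hspec : P (Nat.findGreatest P (i - 1)) :=
          Nat.findGreatest_spec (P := P) (n := i - 1) (m := k0) (by omega) hSt0
        refine ⟨Nat.findGreatest P (i - 1), ?_, hspec.1, hspec.2, ?_⟩
        · have := Nat.findGreatest_le (P := P) (n := i - 1)
          omega
        · exact fun t h1 h2 => Nat.findGreatest_is_greatest h1 (by omega)
      have hIH := (ih k hki).1 ⟨hko, hkR⟩
      have hgapi := inec_gap o R ho hR i (k + 1) (by omega)
        (fun t ht1 ht2 hc => hkmax t (by omega) ht2 hc)
      push_cast at hgapi
      have hki' : (k : ℤ) < (i : ℤ) := by exact_mod_cast hki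
      have hm0 : (0 : ℤ) ≤ m := by omega
      constructor
      · intro hSti
        have hd1 := hdiv i hSti.1 hSti.2
        have hd2 := hdiv k hko hkR
        have hDdvd : n ∣ (2 * ((i : ℤ) - (k : ℤ)) - (o i - o k)) := by
          have h := dvd_sub hd1 hd2
          have he : (a + 2 * (i : ℤ) - o i) - (a + 2 * (k : ℤ) - o k)
              = 2 * ((i : ℤ) - (k : ℤ)) - (o i - o k) := by ring
          rwa [he] at h
        obtain ⟨t, ht⟩ := hDdvd
        have hRm : R k ≤ R i := hR (le_of_lt hki)
        have hom : o k ≤ o i := ho (le_of_lt hki)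
        have hgain : (m - 1) * ((i : ℤ) - (k : ℤ)) ≤ m * ((o i + R i) - (o k + R k)) := by
          rcases lt_trichotomy t 0 with htl | hte | htg
          · -- D ≤ -n : o jumps by at least 2(i-k)+n
            have hDle : n * t ≤ n * (-1) :=
              mul_le_mul_of_nonneg_left (by omega) (by omega)
            have hDle' : n * t ≤ -n := by linarith
            have hfd : 2 * ((i : ℤ) - (k : ℤ)) ≤ (o i + R i) - (o k + R k) := by omega
            nlinarith [mul_le_mul_of_nonneg_left hfd hm0,
              mul_nonneg (show (0:ℤ) ≤ m + 1 by omega) (show (0:ℤ) ≤ (i:ℤ) - (k:ℤ) by omega)]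
          · -- D = 0 : o jumps by exactly 2(i-k)
            subst hte
            have hfd : 2 * ((i : ℤ) - (k : ℤ)) ≤ (o i + R i) - (o k + R k) := by omega
            nlinarith [mul_le_mul_of_nonneg_left hfd hm0,
              mul_nonneg (show (0:ℤ) ≤ m + 1 by omega) (show (0:ℤ) ≤ (i:ℤ) - (k:ℤ) by omega)]
          · -- D ≥ n : the gap i - k is at least m
            have hDge : n * 1 ≤ n * t :=
              mul_le_mul_of_nonneg_left (by omega) (by omega)
            have hDge' : n ≤ n * t := by linarith
            have hg : m ≤ (i : ℤ) - (k : ℤ) := by omega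
            have hfd : (i : ℤ) - (k : ℤ) - 1 ≤ (o i + R i) - (o k + R k) := by omega
            nlinarith [mul_le_mul_of_nonneg_left hfd hm0]
        nlinarith [hIH, hgain]
      · have hfd : (i : ℤ) - (k : ℤ) - 1 ≤ (o i + R i) - (o k + R k) := by omega
        nlinarith [hIH, mul_le_mul_of_nonneg_left hfd hm0]
    · push_neg at hex
      have hgapi := inec_gap o R ho hR i 0 (Nat.zero_le i) (fun t _ ht2 hc => hex t ht2 hc.1 hc.2)
      push_cast at hgapi
      have hfi : (i : ℤ) ≤ o i + R i := by omega
      have hi0 : (0 : ℤ) ≤ (i : ℤ) := Int.natCast_nonneg i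
      constructor
      · intro _
        nlinarith [mul_le_mul_of_nonneg_left hfi (show (0:ℤ) ≤ m by omega)]
      · nlinarith [mul_le_mul_of_nonneg_left hfi (show (0:ℤ) ≤ m by omega)]

/-- Abstract form of Lemma 1 ('inec'): let `n ≥ 3`, `m := ⌊(n+1)/2⌋`, `a ∈ ℤ`.
Let `o, R : ℕ → ℤ` be nondecreasing with `o(0) ≥ 0`, `R(0) = 0`, such that
whenever `o(i+1) = o(i)` and `R(i+1) = R(i)` one has `n ∣ a + 2i - o(i)`.
Then for all `b ≥ 0` and all `i ≥ b·m`, `o(i) + R(i) ≥ b(m-1)`. -/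
theorem lemma_inec_abstract (n a m : ℤ) (hn : 3 ≤ n) (hm : m = (n + 1) / 2)
    (o R : ℕ → ℤ) (ho : Monotone o) (hR : Monotone R)
    (ho0 : 0 ≤ o 0) (hR0 : R 0 = 0)
    (hdiv : ∀ i : ℕ, o (i + 1) = o i → R (i + 1) = R i → n ∣ a + 2 * (i : ℤ) - o i) :
    ∀ (b i : ℕ), (b : ℤ) * m ≤ (i : ℤ) →
      o i + R i ≥ (b : ℤ) * (m - 1) := by
  have hm2 : 2 ≤ m := by omega
  have hnm : 2 * m - 1 ≤ n := by omega
  intro b i hbi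
  have h1 := (inec_key n a m hn hm2 hnm o R ho hR ho0 hR0 hdiv i).2
  by_contra hcon
  push_neg at hcon
  have h2 : o i + R i ≤ (b : ℤ) * (m - 1) - 1 := by omega
  have h3 : (m - 1) * ((b : ℤ) * m) ≤ (m - 1) * (i : ℤ) :=
    mul_le_mul_of_nonneg_left hbi (by omega)
  have h4 : m * (o i + R i) ≤ m * ((b : ℤ) * (m - 1) - 1) :=
    mul_le_mul_of_nonneg_left h2 (by omega)
  nlinarith [h1, h3, h4]
end

section
/- Let g, r, d, e, f be integers with 0 ≤ f < e ≤ g, r − e + f ≥ 0, f·(r+1−e+f) ≥ e, g − d + r ≥ 0, ρ(g, r, d) − f(r+1−e+f) + e ≥ 0 and ρ(g, r−e+f, d−e) ≥ 0. Set s := r+1−e+f, t := e−f, c := e mod s, c̃ := e mod t, α₀ := ⌊e/s⌋ + d − r − f − e and β₀ := ⌊e/t⌋. Define the sequence γ_0, …, γ_r of r+1 integers by: γ_j := e − β₀ − 1 for 0 ≤ j ≤ c̃−1; γ_j := e − β₀ for c̃ ≤ j ≤ t−1; γ_j := d − r − α₀ − 1 for t ≤ j ≤ t+c−1; and γ_j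 := d − r − α₀ for t+c ≤ j ≤ r. Then Σ_{j=0}^{r} max{γ_j + (g−e) − d + r, 0} ≤ g − e. -/
/-- The Brill–Noether number `ρ(g, r, d) = g - (r+1)(g-d+r)`. -/
def rho (g r d : ℤ) : ℤ := g - (r + 1) * (g - d + r)

private lemma sum_Ioc_split (a b c : ℤ) (F : ℤ → ℤ) (hab : a ≤ b) (hbc : b ≤ c) :
    ∑ j ∈ Finset.Ioc a c, F j = ∑ j ∈ Finset.Ioc a b, F j + ∑ j ∈ Finset.Ioc b c, F j := by
  have hd : Disjoint (Finset.Ioc a b) (Finset.Ioc b c) := by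
    rw [Finset.disjoint_left]
    intro x hx hy
    simp only [Finset.mem_Ioc] at hx hy
    omega
  rw [← Finset.Ioc_union_Ioc_eq_Ioc hab hbc, Finset.sum_union hd]

private lemma sum_Ioc_const (a b v : ℤ) (F : ℤ → ℤ) (hab : a ≤ b)
    (h : ∀ j, a < j → j ≤ b → F j = v) :
    ∑ j ∈ Finset.Ioc a b, F j = (b - a) * v := by
  rw [Finset.sum_congr rfl (fun j hj => h j (Finset.mem_Ioc.mp hj).1 (Finset.mem_Ioc.mp hj).2),
    Finset.sum_const, Int.card_Ioc, nsmul_eq_mul, Int.toNat_of_nonneg (by omega)]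

/-- Verification of inequality (3.6) in the proof of Theorem 0.5: under the
stated numerical hypotheses, the ramification sequence `γ` built from the
balanced Schubert indices `ᾱ` and `β̄` satisfies the Eisenbud–Harris criterion
`Σ_{j=0}^{r} max{γ_j + (g-e) - d + r, 0} ≤ g - e`. -/
theorem eisenbud_harris_condition_gamma (g r d e f s t c c' α₀ β₀ : ℤ)
    (hf : 0 ≤ f) (hfe : f < e) (heg : e ≤ g) (href : 0 ≤ r - e + f)
    (hfs : f * (r + 1 - e + f) ≥ e) (hgdr : 0 ≤ g - d + r)
    (hrho1 : rho g r d - f * (r + 1 - e + f) + e ≥ 0)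
    (hrho2 : rho g (r - e + f) (d - e) ≥ 0)
    (hs : s = r + 1 - e + f) (ht : t = e - f)
    (hc : c = e % s) (hc' : c' = e % t)
    (hα₀ : α₀ = e / s + d - r - f - e) (hβ₀ : β₀ = e / t)
    (γ : ℤ → ℤ)
    (hγ1 : ∀ j, 0 ≤ j → j ≤ c' - 1 → γ j = e - β₀ - 1)
    (hγ2 : ∀ j, c' ≤ j → j ≤ t - 1 → γ j = e - β₀)
    (hγ3 : ∀ j, t ≤ j → j ≤ t + c - 1 → γ j = d - r - α₀ - 1)
    (hγ4 : ∀ j, t + c ≤ j → j ≤ r → γ j = d - r - α₀) :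
    ∑ j ∈ Finset.Icc (0 : ℤ) r, max (γ j + (g - e) - d + r) 0 ≤ g - e := by
  simp only [rho] at hrho1 hrho2
  have hs1 : 1 ≤ s := by omega
  have ht1 : 1 ≤ t := by omega
  have hc0 : 0 ≤ c := hc ▸ Int.emod_nonneg e (by omega)
  have hcs : c < s := hc ▸ Int.emod_lt_of_pos e (by omega)
  have hc'0 : 0 ≤ c' := hc' ▸ Int.emod_nonneg e (by omega)
  have hc't : c' < t := hc' ▸ Int.emod_lt_of_pos e (by omega)
  -- division identities
  have hqs : s * (α₀ - d + r + f + e) + c = e := by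
    have h0 := Int.mul_ediv_add_emod e s
    have h1 : e / s = α₀ - d + r + f + e := by omega
    rw [h1, ← hc] at h0; exact h0
  have hqt : t * β₀ + c' = e := by
    have h0 := Int.mul_ediv_add_emod e t
    rw [← hβ₀, ← hc'] at h0; exact h0
  -- `e/s ≤ f`
  have hfs' : e ≤ s * f := by rw [hs]; linarith [mul_comm f (r + 1 - e + f)]
  have hQf : α₀ - d + r + f + e ≤ f := by
    have h2 : s * (α₀ - d + r + f + e) ≤ s * f := by linarith
    exact le_of_mul_le_mul_left h2 (by omega)
  have hQf1 : 0 < c → α₀ - d + r + f + e ≤ f - 1 := by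
    intro hcpos
    have h2 : s * (α₀ - d + r + f + e) < s * f := by linarith
    have := lt_of_mul_lt_mul_left h2 (by omega : (0:ℤ) ≤ s)
    omega
  -- split the sum into the four constancy blocks
  have e1 : Finset.Icc (0:ℤ) r = Finset.Ioc (-1) r := by
    ext x; simp only [Finset.mem_Icc, Finset.mem_Ioc]; omega
  rw [e1,
    sum_Ioc_split (-1) (c' - 1) r _ (by omega) (by omega),
    sum_Ioc_split (c' - 1) (t - 1) r _ (by omega) (by omega),
    sum_Ioc_split (t - 1) (t + c - 1) r _ (by omega) (by omega),
    sum_Ioc_const (-1) (c' - 1) (max (e - β₀ - 1 + (g - e) - d + r) 0) _ (by omega)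
      (fun j h1 h2 => by rw [hγ1 j (by omega) (by omega)]),
    sum_Ioc_const (c' - 1) (t - 1) (max (e - β₀ + (g - e) - d + r) 0) _ (by omega)
      (fun j h1 h2 => by rw [hγ2 j (by omega) (by omega)]),
    sum_Ioc_const (t - 1) (t + c - 1) (max (d - r - α₀ - 1 + (g - e) - d + r) 0) _ (by omega)
      (fun j h1 h2 => by rw [hγ3 j (by omega) (by omega)]),
    sum_Ioc_const (t + c - 1) r (max (d - r - α₀ + (g - e) - d + r) 0) _ (by omega)
      (fun j h1 h2 => by rw [hγ4 j (by omega) (by omega)])]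
  -- resolve the maxes on the `α` blocks (these are nonnegative)
  have hB : max (d - r - α₀ + (g - e) - d + r) 0 = d - r - α₀ + (g - e) - d + r :=
    max_eq_left (by omega)
  have hB1 : (t + c - 1 - (t - 1)) * max (d - r - α₀ - 1 + (g - e) - d + r) 0
      = c * (d - r - α₀ - 1 + (g - e) - d + r) := by
    rcases eq_or_lt_of_le hc0 with h | h
    · simp [← h]
    · rw [max_eq_left (by have := hQf1 h; omega)]; ring_nf
  rw [hB, hB1]
  -- case analysis on the sign of the `β` blocks
  rcases le_or_gt (g - d + r - β₀) 0 with hA | hA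
  · rw [max_eq_right (by omega), max_eq_right (by omega)]
    nlinarith [hqs, hrho2, hs, ht]
  · rw [max_eq_left (by omega), max_eq_left (by omega)]
    nlinarith [hqs, hqt, hrho1, hs, ht]
end
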